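/- Every open pseudoisometric extension q : (K,G) → (L,G) of topological dynamical systems is equicontinuous. -/

import Mathlib

open Filter Topology Set Function MeasureTheory

/-- A continuous fiber map between the fibers of the bundles `p : X → L` and `q : Y → L'`:
an element of `C_p^q(X,Y)` with source `src` and range `rng`. -/
structure FiberMap {X L Y L' : Type} [TopologicalSpace X] [TopologicalSpace Y]
    (p : X → L) (q : Y → L') where
  src : L
  rng : L'
  toFun : {x : X // p x = src} → Y
  maps_to : ∀ x, q (toFun x) = rng
  continuous_toFun : Continuous toFun

/-- The compact-open topology on `C_p^q(X,Y)`, generated by the sets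
`W(C,O) = {θ | θ(C ∩ X_{s(θ)}) ⊆ O}` for `C ⊆ X` compact and `O ⊆ Y` open. -/
def fiberCO {X L Y L' : Type} [TopologicalSpace X] [TopologicalSpace Y]
    (p : X → L) (q : Y → L') : TopologicalSpace (FiberMap p q) :=
  TopologicalSpace.generateFrom
    {W | ∃ (C : Set X) (O : Set Y), IsCompact C ∧ IsOpen O ∧
      W = {θ : FiberMap p q | ∀ x : {x : X // p x = θ.src}, (x : X) ∈ C → θ.toFun x ∈ O}}

instance fiberMapTopology {X L Y L' : Type} [TopologicalSpace X] [TopologicalSpace Y]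
    (p : X → L) (q : Y → L') : TopologicalSpace (FiberMap p q) :=
  fiberCO p q

/-- The extension `q : (K,G) → (L,G)` is pseudoisometric: there is a set `P` of continuous
functions on `K ×_q K` restricting to pseudometrics on each fiber which generate the
fiber topologies and are invariant under the action of `G`. -/
def IsPseudoIsometricExt (G : Type) {K L : Type} [Group G] [TopologicalSpace K]
    [MulAction G K] (q : K → L) : Prop :=
  ∃ P : Set ({z : K × K // q z.1 = q z.2} → ℝ),
    (∀ p ∈ P, Continuous p) ∧
    (∀ p ∈ P, ∀ z, 0 ≤ p z) ∧
    (∀ p ∈ P, ∀ x : K, p ⟨(x, x), rfl⟩ = 0) ∧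
    (∀ p ∈ P, ∀ x y : K, ∀ h : q x = q y, p ⟨(x, y), h⟩ = p ⟨(y, x), h.symm⟩) ∧
    (∀ p ∈ P, ∀ x y z : K, ∀ (hxy : q x = q y) (hyz : q y = q z),
      p ⟨(x, z), hxy.trans hyz⟩ ≤ p ⟨(x, y), hxy⟩ + p ⟨(y, z), hyz⟩) ∧
    (∀ l : L, (inferInstance : TopologicalSpace {x : K // q x = l}) =
      TopologicalSpace.generateFrom
        {B | ∃ p ∈ P, ∃ (x₀ : {x : K // q x = l}) (ε : ℝ), 0 < ε ∧
          B = {y : {x : K // q x = l} | p ⟨((x₀ : K), (y : K)), x₀.2.trans y.2.symm⟩ < ε}}) ∧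
    (∀ p ∈ P, ∀ g : G, ∀ x y : K, ∀ (h : q x = q y) (h' : q (g • x) = q (g • y)),
      p ⟨(g • x, g • y), h'⟩ = p ⟨(x, y), h⟩)

/-- Every open pseudoisometric extension `q : (K,G) → (L,G)` of topological dynamical
systems is equicontinuous. -/
theorem statement4 {G K L : Type} [Group G] [TopologicalSpace G] [IsTopologicalGroup G]
    [T2Space G] [UniformSpace K] [CompactSpace K] [T2Space K] [Nonempty K]
    [TopologicalSpace L] [CompactSpace L] [T2Space L] [Nonempty L]
    [MulAction G K] [ContinuousSMul G K] [MulAction G L] [ContinuousSMul G L]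
    (q : K → L) (hq : Continuous q) (hqs : Function.Surjective q) (hqo : IsOpenMap q)
    (heq : ∀ (g : G) (x : K), q (g • x) = g • q x)
    (hpi : IsPseudoIsometricExt G q) :
    ∀ U ∈ uniformity K, ∃ V ∈ uniformity K, ∀ (g : G) (x y : K),
      q x = q y → (x, y) ∈ V → (g • x, g • y) ∈ U := by
  obtain ⟨P, hPc, hPnn, hPrefl, hPsymm, hPtri, hPgen, hPinv⟩ := hpi
  -- separation: if all pseudometrics vanish at (x,y) with q x = q y then x = y
  have hsep : ∀ (x y : K) (h : q x = q y), (∀ p ∈ P, p ⟨(x, y), h⟩ = 0) → x = y := by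
    intro x y h h0
    let l := q x
    let x' : {k : K // q k = l} := ⟨x, rfl⟩
    let y' : {k : K // q k = l} := ⟨y, h.symm⟩
    have key : ∀ O : Set {k : K // q k = l}, IsOpen O → (x' ∈ O ↔ y' ∈ O) := by
      intro O hO
      have hgen : (instTopologicalSpaceSubtype : TopologicalSpace {k : K // q k = l}) =
          TopologicalSpace.generateFrom
            {B | ∃ p ∈ P, ∃ (x₀ : {x : K // q x = l}) (ε : ℝ), 0 < ε ∧
              B = {y : {x : K // q x = l} |
                p ⟨((x₀ : K), (y : K)), x₀.2.trans y.2.symm⟩ < ε}} := hPgen l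
      rw [hgen] at hO
      induction hO with
      | basic s hs =>
        obtain ⟨p, hp, x₀, ε, hε, rfl⟩ := hs
        have h0' : p ⟨(x, y), h⟩ = 0 := h0 p hp
        have hsym : p ⟨(y, x), h.symm⟩ = 0 := by
          rw [← hPsymm p hp x y h]; exact h0'
        have hx0x : q (x₀ : K) = q x := x₀.2
        have e1 : p ⟨((x₀ : K), x), hx0x⟩ = p ⟨((x₀ : K), y), hx0x.trans h⟩ := by
          have t1 := hPtri p hp (x₀ : K) x y hx0x h
          have t2 := hPtri p hp (x₀ : K) y x (hx0x.trans h) h.symm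
          have e2 : p ⟨((x₀ : K), y), hx0x.trans h⟩ ≤ p ⟨((x₀ : K), x), hx0x⟩ := by
            calc p ⟨((x₀ : K), y), hx0x.trans h⟩ ≤ p ⟨((x₀ : K), x), hx0x⟩ + p ⟨(x, y), h⟩ := t1
            _ = p ⟨((x₀ : K), x), hx0x⟩ := by rw [h0', add_zero]
          have e3 : p ⟨((x₀ : K), x), hx0x⟩ ≤ p ⟨((x₀ : K), y), hx0x.trans h⟩ := by
            calc p ⟨((x₀ : K), x), hx0x⟩ ≤ p ⟨((x₀ : K), y), hx0x.trans h⟩ + p ⟨(y, x), h.symm⟩ := t2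
            _ = p ⟨((x₀ : K), y), hx0x.trans h⟩ := by rw [hsym, add_zero]
          exact le_antisymm e3 e2
        show p ⟨((x₀ : K), x), _⟩ < ε ↔ p ⟨((x₀ : K), y), _⟩ < ε
        rw [show p ⟨((x₀ : K), x), x₀.2.trans x'.2.symm⟩ = p ⟨((x₀ : K), x), hx0x⟩ from rfl, e1]
      | univ => simp
      | inter s t _ _ ihs iht => simp only [Set.mem_inter_iff, ihs, iht]
      | sUnion S _ ih =>
        simp only [Set.mem_sUnion]
        exact exists_congr fun t => and_congr_right fun ht => ih t ht
    have hxy : x' = y' := ((inseparable_iff_forall_isOpen).mpr key).eq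
    exact congrArg Subtype.val hxy
  intro U hU
  obtain ⟨U', ⟨hU'm, hU'o⟩, hU'U⟩ := (uniformity_hasBasis_open (α := K)).mem_iff.mp hU
  have hDclosed : IsClosed {z : K × K | q z.1 = q z.2} :=
    isClosed_eq (hq.comp continuous_fst) (hq.comp continuous_snd)
  haveI : CompactSpace {z : K × K // q z.1 = q z.2} :=
    isCompact_iff_compactSpace.mp hDclosed.isCompact
  set S : Set {z : K × K // q z.1 = q z.2} := {z | (z : K × K) ∉ U'} with hSdef
  have hScl : IsClosed S := (hU'o.preimage continuous_subtype_val).isClosed_compl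
  have hScomp : IsCompact S := hScl.isCompact
  set t : (↥P × ℕ) → Set {z : K × K // q z.1 = q z.2} :=
    fun i => {z | (i.1 : {z : K × K // q z.1 = q z.2} → ℝ) z ≤ 1 / (i.2 + 1)} with htdef
  have htc : ∀ i, IsClosed (t i) := fun i => isClosed_le (hPc i.1 i.1.2) continuous_const
  have hempty : S ∩ ⋂ i, t i = ∅ := by
    rw [Set.eq_empty_iff_forall_notMem]
    rintro z ⟨hzS, hzI⟩
    have hz0 : ∀ p ∈ P, p z = 0 := by
      intro p hp
      refine le_antisymm ?_ (hPnn p hp z)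
      by_contra hlt
      push_neg at hlt
      obtain ⟨n, hn⟩ := exists_nat_one_div_lt hlt
      have hmem := Set.mem_iInter.mp hzI (⟨p, hp⟩, n)
      simp only [htdef, Set.mem_setOf_eq] at hmem
      linarith
    have hxy : z.1.1 = z.1.2 := hsep z.1.1 z.1.2 z.2 (fun p hp => hz0 p hp)
    have hdiag : (z : K × K) = (z.1.1, z.1.1) := by
      rw [show (z : K × K) = (z.1.1, z.1.2) from rfl, hxy]
    exact hzS (by rw [hdiag]; exact refl_mem_uniformity hU'm)
  obtain ⟨u, hu⟩ := hScomp.elim_finite_subfamily_closed t htc hempty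
  set W : Set {z : K × K // q z.1 = q z.2} :=
    ⋂ i ∈ u, {z | (i.1 : {z : K × K // q z.1 = q z.2} → ℝ) z < 1 / (i.2 + 1)} with hWdef
  have hWopen : IsOpen W :=
    isOpen_biInter_finset fun i _ => isOpen_lt (hPc i.1 i.1.2) continuous_const
  have hWU' : ∀ z ∈ W, (z : K × K) ∈ U' := by
    intro z hz
    by_contra hzn
    have hzt : z ∈ ⋂ i ∈ u, t i := by
      simp only [hWdef, Set.mem_iInter] at hz
      simp only [htdef, Set.mem_iInter, Set.mem_setOf_eq]
      exact fun i hi => le_of_lt (hz i hi)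
    have : z ∈ S ∩ ⋂ i ∈ u, t i := ⟨hzn, hzt⟩
    rw [hu] at this; exact this
  have hWdiag : ∀ x : K, (⟨(x, x), rfl⟩ : {z : K × K // q z.1 = q z.2}) ∈ W := by
    intro x
    simp only [hWdef, Set.mem_iInter, Set.mem_setOf_eq]
    intro i hi
    rw [hPrefl i.1 i.1.2 x]
    positivity
  have hWinv : ∀ (g : G) (x y : K) (h : q x = q y) (h' : q (g • x) = q (g • y)),
      (⟨(x, y), h⟩ : {z : K × K // q z.1 = q z.2}) ∈ W →
      (⟨(g • x, g • y), h'⟩ : {z : K × K // q z.1 = q z.2}) ∈ W := by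
    intro g x y h h' hz
    simp only [hWdef, Set.mem_iInter, Set.mem_setOf_eq] at hz ⊢
    intro i hi
    rw [hPinv i.1 i.1.2 g x y h h']
    exact hz i hi
  obtain ⟨O, hOopen, hOW⟩ := isOpen_induced_iff.mp hWopen
  refine ⟨O ∪ {z : K × K | q z.1 ≠ q z.2}, ?_, ?_⟩
  · rw [← nhdsSet_diagonal_eq_uniformity]
    refine ((hOopen.union hDclosed.isOpen_compl).mem_nhdsSet).mpr ?_
    rintro ⟨a, b⟩ hab
    have hab' : a = b := hab
    subst hab'
    left
    have := hWdiag a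
    rw [← hOW] at this
    exact this
  · intro g x y hxy hV
    have h' : q (g • x) = q (g • y) := by rw [heq, heq, hxy]
    rcases hV with hO | hne
    · have hW1 : (⟨(x, y), hxy⟩ : {z : K × K // q z.1 = q z.2}) ∈ W := by
        rw [← hOW]; exact hO
      exact hU'U (hWU' _ (hWinv g x y hxy h' hW1))
    · exact absurd hxy hne
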